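/- Let X be an infinite chain with X = X^+. Then no order-preserving self-map of X with finite image belongs to the subsemigroup generated by J = {β ∈ O(X) : |Im(β)| = |X|}; that is, J_f ∩ ⟨J⟩ = ∅. -/

import Mathlib

theorem stmt_12 {X : Type*} [LinearOrder X] [Infinite X]
    (hXp : ∀ x : X, Cardinal.mk ↥(Set.Ici x) < Cardinal.mk X)
    (α : X → X) (hα : Monotone α) (hfin : (Set.range α).Finite) :
    ¬ ∃ l : List (X → X), l ≠ [] ∧
      (∀ f ∈ l, Monotone f ∧ Cardinal.mk ↥(Set.range f) = Cardinal.mk X) ∧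
      α = l.foldr (· ∘ ·) id := by
  rintro ⟨l, -, hl, rfl⟩
  -- X has no minimum
  have hne : ∀ x : X, ∃ z : X, z < x := by
    intro x
    by_contra h
    push_neg at h
    have huniv : Set.Ici x = Set.univ := by
      ext z; simp [h z]
    have := hXp x
    rw [huniv] at this
    simp at this
  -- key: the range of the composition is coinitial
  have key : ∀ m : List (X → X),
      (∀ f ∈ m, Monotone f ∧ Cardinal.mk ↥(Set.range f) = Cardinal.mk X) →
      ∀ x : X, ∃ z : X, (m.foldr (· ∘ ·) id) z < x := by
    intro m
    induction m with
    | nil =>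
      intro _ x
      obtain ⟨z, hz⟩ := hne x
      exact ⟨z, hz⟩
    | cons f t ih =>
      intro h x
      obtain ⟨hfmono, hfcard⟩ := h f List.mem_cons_self
      have ht : ∀ g ∈ t, Monotone g ∧ Cardinal.mk ↥(Set.range g) = Cardinal.mk X :=
        fun g hg => h g (List.mem_cons_of_mem f hg)
      -- range f is not contained in Ici x
      have hex : ∃ z : X, f z < x := by
        by_contra hcon
        push_neg at hcon
        have hsub : Set.range f ⊆ Set.Ici x := by
          rintro y ⟨z, rfl⟩
          exact hcon z
        have hle : Cardinal.mk ↥(Set.range f) ≤ Cardinal.mk ↥(Set.Ici x) :=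
          Cardinal.mk_le_mk_of_subset hsub
        have := lt_of_le_of_lt hle (hXp x)
        rw [hfcard] at this
        exact lt_irrefl _ this
      obtain ⟨z, hz⟩ := hex
      obtain ⟨w, hw⟩ := ih ht z
      refine ⟨w, ?_⟩
      have : f ((t.foldr (· ∘ ·) id) w) ≤ f z := hfmono hw.le
      calc ((f :: t).foldr (· ∘ ·) id) w = f ((t.foldr (· ∘ ·) id) w) := rfl
        _ ≤ f z := this
        _ < x := hz
  -- range of the composition is nonempty and finite, so it has a minimum
  set β := l.foldr (· ∘ ·) id with hβ
  have hnonempty : (Set.range β).Nonempty := Set.range_nonempty β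
  obtain ⟨m, hm, hmin⟩ := Set.exists_min_image (Set.range β) id hfin hnonempty
  obtain ⟨z, hz⟩ := key l hl m
  exact absurd (hmin (β z) (Set.mem_range_self z)) (not_le.mpr hz)
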